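/- Let k ≥ 2 and p ≥ 1, let G be a simple graph whose vertex set is partitioned into V_1, …, V_k each of size p, and let G' be the graph constructed from (G, V_1, …, V_k) as described. Then G has a multicolored clique if and only if G' has an induced forest on k' = 3k + 3·C(k,2) + 1 vertices. -/

import Mathlib

/-- Vertex names for the graph `G'` built from a Multicolored Clique instance. -/
inductive MV (k p : ℕ) : Type where
  | z : Fin k → Fin p → MV k p
  | r : Fin k → Fin k → Fin p → Fin p → MV k p
  | ax : Fin k → MV k p
  | ay : Fin k → MV k p
  | bx : Fin k → Fin k → MV k p
  | byy : Fin k → Fin k → MV k p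
  | beta : MV k p

/-- Which vertex names actually occur as vertices of `G'`. -/
def MVValid {k p : ℕ} (G : SimpleGraph (Fin k × Fin p)) : MV k p → Prop
  | MV.r i j s t => i < j ∧ G.Adj (i, s) (j, t)
  | MV.bx i j => i < j
  | MV.byy i j => i < j
  | _ => True

/-- The vertex set of `G'`. -/
abbrev MVert (k p : ℕ) (G : SimpleGraph (Fin k × Fin p)) : Type :=
  {v : MV k p // MVValid G v}

/-- One direction of the adjacency relation of `G'` (it is symmetrized below). -/
def MVAdj {k p : ℕ} : MV k p → MV k p → Prop
  | MV.z i s, MV.z i' s' => i = i' ∧ s ≠ s'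
  | MV.r i j s t, MV.r i' j' s' t' => i = i' ∧ j = j' ∧ (s ≠ s' ∨ t ≠ t')
  | MV.z i h, MV.r i' j' s t => (i = i' ∧ h ≠ s) ∨ (i = j' ∧ h ≠ t)
  | MV.ax i, MV.z i' _ => i = i'
  | MV.ay i, MV.z i' _ => i = i'
  | MV.bx i j, MV.r i' j' _ _ => i = i' ∧ j = j'
  | MV.byy i j, MV.r i' j' _ _ => i = i' ∧ j = j'
  | MV.beta, MV.z _ _ => True
  | MV.beta, MV.r _ _ _ _ => True
  | _, _ => False

/-- The graph `G'`. -/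
def Gp {k p : ℕ} (G : SimpleGraph (Fin k × Fin p)) : SimpleGraph (MVert k p G) :=
  SimpleGraph.fromRel (fun a b => MVAdj a.1 b.1)

/-- The set `Z(i)`. -/
def Zset {k p : ℕ} (G : SimpleGraph (Fin k × Fin p)) (i : Fin k) : Set (MVert k p G) :=
  {v | ∃ s, v.1 = MV.z i s}

/-- The set `R(i,j)`. -/
def Rset {k p : ℕ} (G : SimpleGraph (Fin k × Fin p)) (i j : Fin k) : Set (MVert k p G) :=
  {v | ∃ s t, v.1 = MV.r i j s t}

/-- The set `Z_{+α}(i)`. -/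
def ZAset {k p : ℕ} (G : SimpleGraph (Fin k × Fin p)) (i : Fin k) : Set (MVert k p G) :=
  Zset G i ∪ {v | v.1 = MV.ax i ∨ v.1 = MV.ay i}

/-- The set `R_{+α}(i,j)`. -/
def RAset {k p : ℕ} (G : SimpleGraph (Fin k × Fin p)) (i j : Fin k) : Set (MVert k p G) :=
  Rset G i j ∪ {v | v.1 = MV.bx i j ∨ v.1 = MV.byy i j}

/-- The set `A` of all `α`-vertices. -/
def Aset {k p : ℕ} (G : SimpleGraph (Fin k × Fin p)) : Set (MVert k p G) :=
  {v | (∃ i, v.1 = MV.ax i ∨ v.1 = MV.ay i) ∨ (∃ i j, v.1 = MV.bx i j ∨ v.1 = MV.byy i j)}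

/-- `F` is an induced forest in `G'`: the induced subgraph has no cycle. -/
def IsInducedForest {k p : ℕ} (G : SimpleGraph (Fin k × Fin p))
    (F : Set (MVert k p G)) : Prop :=
  ((Gp G).induce F).IsAcyclic

/- ------------------- auxiliary material ------------------- -/

deriving instance DecidableEq for MV
deriving instance Fintype for MV

open SimpleGraph

lemma MCC.not_acyclic_of_triangle {V : Type*} {H : SimpleGraph V} {a b c : V}
    (hab : H.Adj a b) (hbc : H.Adj b c) (hca : H.Adj c a) : ¬ H.IsAcyclic := by
  intro hA
  have hne1 : a ≠ b := hab.ne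
  have hne2 : b ≠ c := hbc.ne
  have hne3 : c ≠ a := hca.ne
  have hc : (Walk.cons hab (Walk.cons hbc (Walk.cons hca Walk.nil))).IsCycle := by
    rw [Walk.cons_isCycle_iff]
    constructor
    · rw [Walk.isPath_def]
      simp only [Walk.support_cons, Walk.support_nil]
      have h1 : b ∉ [c, a] := by
        intro hm
        rcases List.mem_cons.mp hm with h | h
        · exact hne2 h
        · exact hne1 ((List.mem_singleton.mp h).symm)
      have h2 : c ∉ [a] := by
        intro hm
        exact hne3 (List.mem_singleton.mp hm)
      exact List.nodup_cons.2 ⟨h1, List.nodup_cons.2 ⟨h2, List.nodup_singleton _⟩⟩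
    · simp only [Walk.edges_cons, Walk.edges_nil, List.mem_cons, List.not_mem_nil, or_false]
      intro hmem
      rcases hmem with h | h <;> rw [Sym2.eq_iff] at h <;>
        rcases h with ⟨h1, h2⟩ | ⟨h1, h2⟩ <;>
        first
          | exact hne1 h1
          | exact hne3 h1.symm
          | exact hne2 h2
          | exact hne2 h2.symm
  exact hA _ hc

lemma MCC.leveled_acyclic {V : Type*} {H : SimpleGraph V} (f : V → ℕ)
    (hlevel : ∀ a b, H.Adj a b → f a + 1 = f b ∨ f b + 1 = f a)
    (hparent : ∀ a b c, H.Adj a b → H.Adj a c → f b + 1 = f a → f c + 1 = f a → b = c) :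
    H.IsAcyclic := by
  classical
  have aux : ∀ (v0 : V) (c : H.Walk v0 v0), c.IsCycle → (∀ y ∈ c.support, f y ≤ f v0) → False := by
    intro v0 c hc hmax
    cases c with
    | nil => exact hc.ne_nil rfl
    | @cons _ w _ hadj q =>
      obtain ⟨x, r, hx, heq⟩ := Walk.exists_cons_eq_concat hadj q
      have hwsup : w ∈ (Walk.cons hadj q).support := by
        simp only [Walk.support_cons, List.mem_cons]
        exact Or.inr q.start_mem_support
      have hxsup : x ∈ (Walk.cons hadj q).support := by
        rw [heq, Walk.support_concat]
        exact List.mem_append.2 (Or.inl r.end_mem_support)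
      have hfw : f w + 1 = f v0 := by
        rcases hlevel v0 w hadj with h | h
        · have := hmax w hwsup; omega
        · exact h
      have hfx : f x + 1 = f v0 := by
        rcases hlevel v0 x hx.symm with h | h
        · have := hmax x hxsup; omega
        · exact h
      have hwx : w = x := hparent v0 w x hadj hx.symm hfw hfx
      subst hwx
      have hnodup : (Walk.cons hadj q).edges.Nodup := hc.isTrail.edges_nodup
      have hlen : 3 ≤ (Walk.cons hadj q).length := hc.three_le_length
      have hedges : s(v0, w) :: q.edges = r.edges ++ [s(w, v0)] := by
        have h := congrArg Walk.edges heq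
        rw [Walk.edges_cons, Walk.edges_concat, List.concat_eq_append] at h
        exact h
      rcases hre : r.edges with _ | ⟨e0, es⟩
      · rw [hre, List.nil_append] at hedges
        have hq0 : q.edges = [] := (List.cons.injEq _ _ _ _ ▸ hedges).2
        have : (Walk.cons hadj q).length = 1 := by
          rw [← Walk.length_edges, Walk.edges_cons, hq0]
          rfl
        omega
      · rw [hre, List.cons_append] at hedges
        have hq : q.edges = es ++ [s(w, v0)] := (List.cons.injEq _ _ _ _ ▸ hedges).2
        have hmem : s(v0, w) ∈ q.edges := by
          rw [hq, Sym2.eq_swap]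
          simp
        rw [Walk.edges_cons] at hnodup
        exact (List.nodup_cons.mp hnodup).1 hmem
  intro v c hc
  obtain ⟨v0, hv0, hmax⟩ := (c.support.toFinset).exists_max_image f ⟨v, by simp⟩
  rw [List.mem_toFinset] at hv0
  have hc' := hc.rotate hv0
  apply aux v0 (c.rotate v0 hv0) hc'
  intro y hy
  rw [Walk.support_eq_cons (c.rotate v0 hv0), List.mem_cons] at hy
  rcases hy with rfl | h
  · exact le_refl _
  · have : y ∈ c.support.tail := (Walk.support_rotate c v0 hv0).mem_iff.mp h
    exact hmax y (List.mem_toFinset.2 (List.mem_of_mem_tail this))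

lemma MCC.card_lt_pairs (k : ℕ) :
    (Finset.univ.filter (fun q : Fin k × Fin k => q.1 < q.2)).card = k.choose 2 := by
  have h1 : (Finset.univ.filter (fun q : Fin k × Fin k => q.1 < q.2)).card
      = ∑ i : Fin k, (Finset.Ioi i).card := by
    rw [Finset.card_eq_sum_card_fiberwise (f := Prod.fst)
      (t := Finset.univ) (fun x _ => Finset.mem_univ _)]
    refine Finset.sum_congr rfl fun i _ => ?_
    refine Finset.card_bij (fun q _ => q.2) ?_ ?_ ?_
    · intro q hq
      simp only [Finset.mem_filter, Finset.mem_univ, true_and] at hq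
      rw [Finset.mem_Ioi]
      exact hq.2 ▸ hq.1
    · intro q hq q' hq'
      simp only [Finset.mem_filter, Finset.mem_univ, true_and] at hq hq'
      intro h2
      exact Prod.ext (hq.2.trans hq'.2.symm) h2
    · intro j hj
      rw [Finset.mem_Ioi] at hj
      exact ⟨(i, j), by simp [hj], rfl⟩
  rw [h1]
  have h2 : ∀ i : Fin k, (Finset.Ioi i).card = k - 1 - i := fun i => Fin.card_Ioi i
  rw [Finset.sum_congr rfl (fun i _ => h2 i), Fin.sum_univ_eq_sum_range]
  have h3 : ∑ i ∈ Finset.range k, (k - 1 - i) = ∑ i ∈ Finset.range k, i := by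
    rw [← Finset.sum_range_reflect]
    refine Finset.sum_congr rfl fun i hi => ?_
    rw [Finset.mem_range] at hi
    omega
  rw [h3, Nat.choose_two_right]
  have := Finset.sum_range_id_mul_two k
  omega

lemma MCC.Gp_adj {k p : ℕ} (G : SimpleGraph (Fin k × Fin p)) (a b : MVert k p G) :
    (Gp G).Adj a b ↔ a ≠ b ∧ (MVAdj a.1 b.1 ∨ MVAdj b.1 a.1) := by
  rw [Gp, SimpleGraph.fromRel_adj]

lemma MCC.triangle_free {k p : ℕ} {G : SimpleGraph (Fin k × Fin p)} {F : Set (MVert k p G)}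
    (hF : IsInducedForest G F) {a b c : MVert k p G}
    (ha : a ∈ F) (hb : b ∈ F) (hc : c ∈ F)
    (hab : (Gp G).Adj a b) (hbc : (Gp G).Adj b c) (hca : (Gp G).Adj c a) : False := by
  refine MCC.not_acyclic_of_triangle (H := (Gp G).induce F)
    (a := ⟨a, ha⟩) (b := ⟨b, hb⟩) (c := ⟨c, hc⟩) ?_ ?_ ?_ hF
  · exact hab
  · exact hbc
  · exact hca

/-- The level of a vertex in the forest we construct. -/
def MVlvl {k p : ℕ} : MV k p → ℕ
  | MV.z _ _ => 1
  | MV.r _ _ _ _ => 1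
  | MV.beta => 0
  | _ => 2

/-- Which vertices are kept in the forest built from a clique `h`. -/
def Fpat {k p : ℕ} (h : Fin k → Fin p) : MV k p → Prop
  | MV.z i s => s = h i
  | MV.r i j s t => s = h i ∧ t = h j
  | _ => True


/-- canonical parent in the constructed forest -/
def MVparent {k p : ℕ} (h : Fin k → Fin p) : MV k p → MV k p
  | MV.ax i => MV.z i (h i)
  | MV.ay i => MV.z i (h i)
  | MV.bx i j => MV.r i j (h i) (h j)
  | MV.byy i j => MV.r i j (h i) (h j)
  | _ => MV.beta

lemma MCC.key_level {k p : ℕ} (h : Fin k → Fin p) :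
    ∀ x y : MV k p, Fpat h x → Fpat h y → MVAdj x y →
      MVlvl x + 1 = MVlvl y ∨ MVlvl y + 1 = MVlvl x := by
  intro x y hx hy hxy
  cases x <;> cases y <;> simp_all [MVAdj, MVlvl, Fpat] <;>
    first
      | exact hxy.2 (by rw [hxy.1])
      | (rcases hxy with ⟨rfl, hne⟩ | ⟨rfl, hne⟩ <;> exact hne (by simp_all))
      | (obtain ⟨rfl, rfl, hne | hne⟩ := hxy <;> exact hne (by simp_all))

lemma MCC.parent_eq {k p : ℕ} (h : Fin k → Fin p) :
    ∀ x y : MV k p, Fpat h x → Fpat h y → (MVAdj x y ∨ MVAdj y x) →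
      MVlvl y + 1 = MVlvl x → y = MVparent h x := by
  intro x y hx hy hadj hlvl
  cases x <;> cases y <;> simp_all [MVAdj, MVlvl, Fpat, MVparent]

def MCC.Idx (k : ℕ) : Type :=
  (Fin k ⊕ Fin k ⊕ Fin k) ⊕
    (({q : Fin k × Fin k // q.1 < q.2} ⊕ {q : Fin k × Fin k // q.1 < q.2} ⊕
      {q : Fin k × Fin k // q.1 < q.2}) ⊕ Unit)

instance (k : ℕ) : Fintype (MCC.Idx k) := by unfold MCC.Idx; infer_instance

def MCC.emb {k p : ℕ} (G : SimpleGraph (Fin k × Fin p)) (h : Fin k → Fin p)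
    (hcl : ∀ i j : Fin k, i ≠ j → G.Adj (i, h i) (j, h j)) : MCC.Idx k → MVert k p G
  | .inl (.inl i) => ⟨MV.z i (h i), trivial⟩
  | .inl (.inr (.inl i)) => ⟨MV.ax i, trivial⟩
  | .inl (.inr (.inr i)) => ⟨MV.ay i, trivial⟩
  | .inr (.inl (.inl q)) => ⟨MV.r q.1.1 q.1.2 (h q.1.1) (h q.1.2), ⟨q.2, hcl _ _ (Fin.ne_of_lt q.2)⟩⟩
  | .inr (.inl (.inr (.inl q))) => ⟨MV.bx q.1.1 q.1.2, q.2⟩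
  | .inr (.inl (.inr (.inr q))) => ⟨MV.byy q.1.1 q.1.2, q.2⟩
  | .inr (.inr _) => ⟨MV.beta, trivial⟩

lemma MCC.emb_injective {k p : ℕ} (G : SimpleGraph (Fin k × Fin p)) (h : Fin k → Fin p)
    (hcl : ∀ i j : Fin k, i ≠ j → G.Adj (i, h i) (j, h j)) :
    Function.Injective (MCC.emb G h hcl) := by
  intro a b hab
  rcases a with (i | (i | i)) | ((q | (q | q)) | u) <;>
    rcases b with (i' | (i' | i')) | ((q' | (q' | q')) | u') <;>
    simp only [MCC.emb, Subtype.ext_iff, MV.z.injEq, MV.r.injEq, MV.ax.injEq, MV.ay.injEq,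
      MV.bx.injEq, MV.byy.injEq, reduceCtorEq] at hab <;>
    first
      | (exact hab.elim)
      | (exact congrArg _ (congrArg _ (Subsingleton.elim u u')))
      | (have hq : q = q' := Subtype.ext (Prod.ext hab.1 hab.2.1); rw [hq])
      | (have hq : q = q' := Subtype.ext (Prod.ext hab.1 hab.2); rw [hq])
      | (have hi : i = i' := hab.1; rw [hi])
      | (have hi : i = i' := hab; rw [hi])

lemma MCC.emb_range {k p : ℕ} (G : SimpleGraph (Fin k × Fin p)) (h : Fin k → Fin p)
    (hcl : ∀ i j : Fin k, i ≠ j → G.Adj (i, h i) (j, h j)) :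
    Set.range (MCC.emb G h hcl) = {v : MVert k p G | Fpat h v.1} := by
  ext v
  constructor
  · rintro ⟨a, rfl⟩
    rcases a with (i | (i | i)) | ((q | (q | q)) | u) <;> simp [MCC.emb, Fpat]
  · intro hv
    obtain ⟨val, hval⟩ := v
    cases val with
    | z i s =>
        refine ⟨.inl (.inl i), ?_⟩
        have : s = h i := hv
        simp [MCC.emb, this]
    | r i j s t =>
        refine ⟨.inr (.inl (.inl ⟨(i, j), hval.1⟩)), ?_⟩
        have h2 : s = h i ∧ t = h j := hv
        simp [MCC.emb, h2.1, h2.2]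
    | ax i => exact ⟨.inl (.inr (.inl i)), rfl⟩
    | ay i => exact ⟨.inl (.inr (.inr i)), rfl⟩
    | bx i j => exact ⟨.inr (.inl (.inr (.inl ⟨(i, j), hval⟩))), rfl⟩
    | byy i j => exact ⟨.inr (.inl (.inr (.inr ⟨(i, j), hval⟩))), rfl⟩
    | beta => exact ⟨.inr (.inr ()), rfl⟩

lemma MCC.card_Idx (k : ℕ) : Nat.card (MCC.Idx k) = 3 * k + 3 * Nat.choose k 2 + 1 := by
  rw [Nat.card_eq_fintype_card]
  unfold MCC.Idx
  simp only [Fintype.card_sum, Fintype.card_fin, Fintype.card_unit, Fintype.card_subtype,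
    MCC.card_lt_pairs]
  ring

lemma MCC.forward {k p : ℕ} (G : SimpleGraph (Fin k × Fin p)) (h : Fin k → Fin p)
    (hcl : ∀ i j : Fin k, i ≠ j → G.Adj (i, h i) (j, h j)) :
    ∃ F : Set (MVert k p G),
      F.ncard = 3 * k + 3 * Nat.choose k 2 + 1 ∧ IsInducedForest G F := by
  refine ⟨{v : MVert k p G | Fpat h v.1}, ?_, ?_⟩
  · rw [← MCC.emb_range G h hcl, ← Nat.card_coe_set_eq,
      Nat.card_range_of_injective (MCC.emb_injective G h hcl), MCC.card_Idx]
  · unfold IsInducedForest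
    apply MCC.leveled_acyclic (f := fun v => MVlvl v.1.1)
    · intro a b hadj
      have hGp : (Gp G).Adj a.1 b.1 := hadj
      rcases (MCC.Gp_adj G a.1 b.1).mp hGp with ⟨-, hor | hor⟩
      · exact MCC.key_level h a.1.1 b.1.1 a.2 b.2 hor
      · exact (MCC.key_level h b.1.1 a.1.1 b.2 a.2 hor).symm
    · intro a b c hab hac hlb hlc
      have hGab : (Gp G).Adj a.1 b.1 := hab
      have hGac : (Gp G).Adj a.1 c.1 := hac
      have h1 := (MCC.Gp_adj G a.1 b.1).mp hGab
      have h2 := (MCC.Gp_adj G a.1 c.1).mp hGac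
      have e1 : b.1.1 = MVparent h a.1.1 :=
        MCC.parent_eq h a.1.1 b.1.1 a.2 b.2 h1.2 hlb
      have e2 : c.1.1 = MVparent h a.1.1 :=
        MCC.parent_eq h a.1.1 c.1.1 a.2 c.2 h2.2 hlc
      exact Subtype.ext (Subtype.ext (e1.trans e2.symm))

lemma MCC.card_le_three {V : Type*} [DecidableEq V] {H : SimpleGraph V}
    (T : Finset V) (P : V → Prop) [DecidablePred P]
    (hadj : ∀ a ∈ T, ∀ b ∈ T, a ≠ b → (P a ∨ P b) → H.Adj a b)
    (hnp : (T.filter (fun a => ¬ P a)).card ≤ 2)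
    (htri : ∀ a b c : V, a ∈ T → b ∈ T → c ∈ T →
      H.Adj a b → H.Adj b c → H.Adj c a → False) :
    T.card ≤ 3 := by
  by_contra hgt
  push_neg at hgt
  have hsplit := Finset.card_filter_add_card_filter_not (s := T) (p := fun a => P a)
  have hQ2 : 2 ≤ (T.filter (fun a => P a)).card := by omega
  obtain ⟨a, ha, b, hb, hne⟩ := Finset.one_lt_card.mp (by omega : 1 < (T.filter (fun a => P a)).card)
  rw [Finset.mem_filter] at ha hb
  have hrest : ((T \ {a, b}).card ≠ 0) := by
    have h2 : ({a, b} : Finset V).card ≤ 2 := Finset.card_insert_le _ _ |>.trans (by simp)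
    have := Finset.le_card_sdiff ({a, b} : Finset V) T
    omega
  obtain ⟨c, hc⟩ := Finset.card_ne_zero.mp hrest |>.exists_mem
  rw [Finset.mem_sdiff] at hc
  have hca : c ≠ a := fun hh => hc.2 (by simp [hh])
  have hcb : c ≠ b := fun hh => hc.2 (by simp [hh])
  exact htri a b c ha.1 hb.1 hc.1
    (hadj a ha.1 b hb.1 hne (Or.inl ha.2))
    (hadj b hb.1 c hc.1 (Ne.symm hcb) (Or.inl hb.2))
    (hadj c hc.1 a ha.1 hca (Or.inr ha.2))

/-- classification of vertices of `G'` into groups -/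
def MCC.cls {k p : ℕ} {G : SimpleGraph (Fin k × Fin p)} (v : MVert k p G) :
    Fin k ⊕ (Fin k × Fin k) ⊕ Unit :=
  match v.1 with
  | MV.z i _ => .inl i
  | MV.ax i => .inl i
  | MV.ay i => .inl i
  | MV.r i j _ _ => .inr (.inl (i, j))
  | MV.bx i j => .inr (.inl (i, j))
  | MV.byy i j => .inr (.inl (i, j))
  | MV.beta => .inr (.inr ())

/-- the per-group bound -/
def MCC.B (k : ℕ) : Fin k ⊕ (Fin k × Fin k) ⊕ Unit → ℕ
  | .inl _ => 3
  | .inr (.inl q) => if q.1 < q.2 then 3 else 0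
  | .inr (.inr _) => 1

lemma MCC.B_sum (k : ℕ) : ∑ c : Fin k ⊕ (Fin k × Fin k) ⊕ Unit, MCC.B k c
    = 3 * k + 3 * Nat.choose k 2 + 1 := by
  rw [Fintype.sum_sum_type, Fintype.sum_sum_type]
  have h1 : ∑ i : Fin k, MCC.B k (.inl i) = 3 * k := by
    simp [MCC.B, Finset.sum_const, mul_comm]
  have h2 : ∑ q : Fin k × Fin k, MCC.B k (.inr (.inl q)) = 3 * Nat.choose k 2 := by
    show ∑ q : Fin k × Fin k, (if q.1 < q.2 then 3 else 0) = _
    rw [← Finset.sum_filter, Finset.sum_const, MCC.card_lt_pairs]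
    simp [mul_comm]
  have h3 : ∑ u : Unit, MCC.B k (.inr (.inr u)) = 1 := by simp [MCC.B]
  omega

lemma MCC.cls_inl {k p : ℕ} {G : SimpleGraph (Fin k × Fin p)} (v : MVert k p G) (i : Fin k) :
    MCC.cls v = .inl i ↔ (∃ s, v.1 = MV.z i s) ∨ v.1 = MV.ax i ∨ v.1 = MV.ay i := by
  obtain ⟨val, hval⟩ := v
  cases val <;> simp [MCC.cls] <;> aesop

lemma MCC.cls_pair {k p : ℕ} {G : SimpleGraph (Fin k × Fin p)} (v : MVert k p G) (i j : Fin k) :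
    MCC.cls v = .inr (.inl (i, j)) ↔
      (∃ s t, v.1 = MV.r i j s t) ∨ v.1 = MV.bx i j ∨ v.1 = MV.byy i j := by
  obtain ⟨val, hval⟩ := v
  cases val <;> simp [MCC.cls] <;> aesop

lemma MCC.cls_beta {k p : ℕ} {G : SimpleGraph (Fin k × Fin p)} (v : MVert k p G) (u : Unit) :
    MCC.cls v = .inr (.inr u) ↔ v.1 = MV.beta := by
  obtain ⟨val, hval⟩ := v
  cases val <;> simp [MCC.cls]

lemma MCC.vne {k p : ℕ} {G : SimpleGraph (Fin k × Fin p)} {x y : MVert k p G}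
    (hxy : x.1 ≠ y.1) : x ≠ y := fun e => hxy (congrArg Subtype.val e)

lemma MCC.backward {k p : ℕ} (G : SimpleGraph (Fin k × Fin p)) (F : Set (MVert k p G))
    (hcard : F.ncard = 3 * k + 3 * Nat.choose k 2 + 1) (hforest : IsInducedForest G F) :
    ∃ h : Fin k → Fin p, ∀ i j : Fin k, i ≠ j → G.Adj (i, h i) (j, h j) := by
  classical
  have hFfin : F.Finite := Set.toFinite F
  set F' := hFfin.toFinset with hF'def
  have hmem : ∀ v, v ∈ F' ↔ v ∈ F := fun v => hFfin.mem_toFinset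
  have hcard' : F'.card = 3 * k + 3 * Nat.choose k 2 + 1 := by
    rw [← Set.ncard_eq_toFinset_card _ hFfin]; exact hcard
  have hsum : F'.card = ∑ c, (F'.filter (fun v => MCC.cls v = c)).card :=
    Finset.card_eq_sum_card_fiberwise fun x _ => Finset.mem_univ _
  -- triangles are forbidden
  have htri : ∀ a b c : MVert k p G, a ∈ F' → b ∈ F' → c ∈ F' →
      (Gp G).Adj a b → (Gp G).Adj b c → (Gp G).Adj c a → False := by
    intro a b c ha hb hc hab hbc hca
    exact MCC.triangle_free hforest ((hmem a).mp ha) ((hmem b).mp hb) ((hmem c).mp hc) hab hbc hca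
  -- the fiberwise bounds
  have hle : ∀ c, (F'.filter (fun v => MCC.cls v = c)).card ≤ MCC.B k c := by
    rintro (i | (⟨i, j⟩ | u))
    · -- the Z(i) group
      show _ ≤ 3
      set T := F'.filter (fun v => MCC.cls v = .inl i) with hTdef
      have hTsh : ∀ x ∈ T, (∃ s, x.1 = MV.z i s) ∨ x.1 = MV.ax i ∨ x.1 = MV.ay i :=
        fun x hx => (MCC.cls_inl x i).mp (Finset.mem_filter.mp hx).2
      refine MCC.card_le_three (H := Gp G) T (fun v => ∃ s, v.1 = MV.z i s) ?_ ?_ ?_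
      · have hcore : ∀ a ∈ T, ∀ b ∈ T, a ≠ b → (∃ s, a.1 = MV.z i s) → (Gp G).Adj a b := by
          intro a ha b hb hne ⟨s, hs⟩
          refine (MCC.Gp_adj G a b).mpr ⟨hne, ?_⟩
          rcases hTsh b hb with ⟨s', hs'⟩ | hb' | hb'
          · refine Or.inl ?_
            rw [hs, hs']
            refine ⟨rfl, fun hss => hne (Subtype.ext ?_)⟩
            rw [hs, hs', hss]
          · refine Or.inr ?_; rw [hs, hb']; exact rfl
          · refine Or.inr ?_; rw [hs, hb']; exact rfl
        intro a ha b hb hne hP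
        rcases hP with hPa | hPb
        · exact hcore a ha b hb hne hPa
        · exact (hcore b hb a ha hne.symm hPb).symm
      · have hss : T.filter (fun a => ¬ ∃ s, a.1 = MV.z i s) ⊆
            {(⟨MV.ax i, trivial⟩ : MVert k p G), ⟨MV.ay i, trivial⟩} := by
          intro x hx
          rw [Finset.mem_filter] at hx
          rcases hTsh x hx.1 with hz | hx' | hx'
          · exact absurd hz hx.2
          · simp only [Finset.mem_insert, Finset.mem_singleton]
            exact Or.inl (Subtype.ext hx')
          · simp only [Finset.mem_insert, Finset.mem_singleton]
            exact Or.inr (Subtype.ext hx')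
        exact (Finset.card_le_card hss).trans ((Finset.card_insert_le _ _).trans (by simp))
      · intro a b c ha hb hc
        exact htri a b c (Finset.mem_filter.mp ha).1 (Finset.mem_filter.mp hb).1
          (Finset.mem_filter.mp hc).1
    · -- the R(i,j) group
      by_cases hlt : i < j
      · show _ ≤ MCC.B k (.inr (.inl (i, j)))
        have hBval : MCC.B k (.inr (.inl (i, j))) = 3 := if_pos hlt
        rw [hBval]
        set T := F'.filter (fun v => MCC.cls v = .inr (.inl (i, j))) with hTdef
        have hTsh : ∀ x ∈ T, (∃ s t, x.1 = MV.r i j s t) ∨ x.1 = MV.bx i j ∨ x.1 = MV.byy i j :=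
          fun x hx => (MCC.cls_pair x i j).mp (Finset.mem_filter.mp hx).2
        refine MCC.card_le_three (H := Gp G) T (fun v => ∃ s t, v.1 = MV.r i j s t) ?_ ?_ ?_
        · have hcore : ∀ a ∈ T, ∀ b ∈ T, a ≠ b → (∃ s t, a.1 = MV.r i j s t) →
              (Gp G).Adj a b := by
            intro a ha b hb hne ⟨s, t, hs⟩
            refine (MCC.Gp_adj G a b).mpr ⟨hne, ?_⟩
            rcases hTsh b hb with ⟨s', t', hs'⟩ | hb' | hb'
            · refine Or.inl ?_
              rw [hs, hs']
              refine ⟨rfl, rfl, ?_⟩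
              by_contra hb2
              push_neg at hb2
              exact hne (Subtype.ext (by rw [hs, hs', hb2.1, hb2.2]))
            · refine Or.inr ?_; rw [hs, hb']; exact ⟨rfl, rfl⟩
            · refine Or.inr ?_; rw [hs, hb']; exact ⟨rfl, rfl⟩
          intro a ha b hb hne hP
          rcases hP with hPa | hPb
          · exact hcore a ha b hb hne hPa
          · exact (hcore b hb a ha hne.symm hPb).symm
        · have hss : T.filter (fun a => ¬ ∃ s t, a.1 = MV.r i j s t) ⊆
              {(⟨MV.bx i j, hlt⟩ : MVert k p G), ⟨MV.byy i j, hlt⟩} := by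
            intro x hx
            rw [Finset.mem_filter] at hx
            rcases hTsh x hx.1 with hr | hx' | hx'
            · exact absurd hr hx.2
            · simp only [Finset.mem_insert, Finset.mem_singleton]
              exact Or.inl (Subtype.ext hx')
            · simp only [Finset.mem_insert, Finset.mem_singleton]
              exact Or.inr (Subtype.ext hx')
          exact (Finset.card_le_card hss).trans ((Finset.card_insert_le _ _).trans (by simp))
        · intro a b c ha hb hc
          exact htri a b c (Finset.mem_filter.mp ha).1 (Finset.mem_filter.mp hb).1
            (Finset.mem_filter.mp hc).1
      · show _ ≤ MCC.B k (.inr (.inl (i, j)))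
        have hBval : MCC.B k (.inr (.inl (i, j))) = 0 := if_neg hlt
        rw [hBval, Nat.le_zero, Finset.card_eq_zero]
        refine Finset.eq_empty_of_forall_notMem fun x hx => ?_
        rcases (MCC.cls_pair x i j).mp (Finset.mem_filter.mp hx).2 with ⟨s, t, hr⟩ | hb | hb
        · have := x.2; rw [hr] at this; exact hlt this.1
        · have := x.2; rw [hb] at this; exact hlt this
        · have := x.2; rw [hb] at this; exact hlt this
    · -- the beta group
      show _ ≤ 1
      refine Finset.card_le_one.mpr fun a ha b hb => ?_
      have h1 := (MCC.cls_beta a u).mp (Finset.mem_filter.mp ha).2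
      have h2 := (MCC.cls_beta b u).mp (Finset.mem_filter.mp hb).2
      exact Subtype.ext (h1.trans h2.symm)
  -- all the bounds are tight
  have htot : ∑ c, (F'.filter (fun v => MCC.cls v = c)).card = ∑ c, MCC.B k c := by
    rw [← hsum, hcard', MCC.B_sum]
  have heq : ∀ c, (F'.filter (fun v => MCC.cls v = c)).card = MCC.B k c := fun c =>
    (Finset.sum_eq_sum_iff_of_le (fun c _ => hle c)).mp htot c (Finset.mem_univ c)
  -- beta is in F
  have hbetaF : (⟨MV.beta, trivial⟩ : MVert k p G) ∈ F := by
    have h1 := heq (.inr (.inr ()))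
    have h2 : (0 : ℕ) < (F'.filter (fun v => MCC.cls v = .inr (.inr ()))).card := by
      rw [h1]; norm_num [MCC.B]
    obtain ⟨x, hx⟩ := Finset.card_pos.mp h2
    rw [Finset.mem_filter] at hx
    have h3 : x.1 = MV.beta := (MCC.cls_beta x ()).mp hx.2
    have h4 : x = ⟨MV.beta, trivial⟩ := Subtype.ext h3
    rw [← h4]
    exact (hmem x).mp hx.1
  -- each Z(i) contributes one z-vertex
  have hz : ∀ i : Fin k, ∃ s, (⟨MV.z i s, trivial⟩ : MVert k p G) ∈ F := by
    intro i
    by_contra hno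
    push_neg at hno
    have h1 := heq (.inl i)
    have hss : F'.filter (fun v => MCC.cls v = .inl i) ⊆
        {(⟨MV.ax i, trivial⟩ : MVert k p G), ⟨MV.ay i, trivial⟩} := by
      intro x hx
      rw [Finset.mem_filter] at hx
      rcases (MCC.cls_inl x i).mp hx.2 with ⟨s, hzx⟩ | hx' | hx'
      · have h4 : x = ⟨MV.z i s, trivial⟩ := Subtype.ext hzx
        exact absurd ((hmem x).mp hx.1) (h4 ▸ hno s)
      · simp only [Finset.mem_insert, Finset.mem_singleton]
        exact Or.inl (Subtype.ext hx')
      · simp only [Finset.mem_insert, Finset.mem_singleton]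
        exact Or.inr (Subtype.ext hx')
    have h5 : (F'.filter (fun v => MCC.cls v = Sum.inl i)).card ≤ 2 :=
      (Finset.card_le_card hss).trans ((Finset.card_insert_le _ _).trans (by simp))
    rw [h1] at h5
    simp [MCC.B] at h5
  -- each R(i,j) contributes one r-vertex
  have hr : ∀ i j : Fin k, i < j →
      ∃ s, ∃ t, ∃ hv : MVValid G (MV.r i j s t), (⟨MV.r i j s t, hv⟩ : MVert k p G) ∈ F := by
    intro i j hlt
    by_contra hno
    push_neg at hno
    have h1 := heq (.inr (.inl (i, j)))
    have hss : F'.filter (fun v => MCC.cls v = .inr (.inl (i, j))) ⊆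
        {(⟨MV.bx i j, hlt⟩ : MVert k p G), ⟨MV.byy i j, hlt⟩} := by
      intro x hx
      rw [Finset.mem_filter] at hx
      rcases (MCC.cls_pair x i j).mp hx.2 with ⟨s, t, hrx⟩ | hx' | hx'
      · obtain ⟨val, hval⟩ := x
        simp only at hrx
        subst hrx
        exact absurd ((hmem _).mp hx.1) (hno s t hval)
      · simp only [Finset.mem_insert, Finset.mem_singleton]
        exact Or.inl (Subtype.ext hx')
      · simp only [Finset.mem_insert, Finset.mem_singleton]
        exact Or.inr (Subtype.ext hx')
    have h5 : (F'.filter (fun v => MCC.cls v = Sum.inr (Sum.inl (i, j)))).card ≤ 2 :=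
      (Finset.card_le_card hss).trans ((Finset.card_insert_le _ _).trans (by simp))
    rw [h1] at h5
    simp [MCC.B, hlt] at h5
  -- the clique
  set h : Fin k → Fin p := fun i => Classical.choose (hz i) with hdef
  have hzF : ∀ i, (⟨MV.z i (h i), trivial⟩ : MVert k p G) ∈ F := fun i =>
    Classical.choose_spec (hz i)
  have hkey : ∀ i j : Fin k, i < j → G.Adj (i, h i) (j, h j) := by
    intro i j hlt
    obtain ⟨s, t, hv, hrF⟩ := hr i j hlt
    have hne_ij : i ≠ j := Fin.ne_of_lt hlt
    have hadj_bz : ∀ i' : Fin k, (Gp G).Adj ⟨MV.beta, trivial⟩ ⟨MV.z i' (h i'), trivial⟩ := by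
      intro i'
      exact (MCC.Gp_adj G _ _).mpr ⟨MCC.vne (by simp), Or.inl trivial⟩
    have hadj_rb : (Gp G).Adj ⟨MV.r i j s t, hv⟩ ⟨MV.beta, trivial⟩ :=
      (MCC.Gp_adj G _ _).mpr ⟨MCC.vne (by simp), Or.inr trivial⟩
    have hs : s = h i := by
      by_contra hne
      refine MCC.triangle_free hforest hbetaF (hzF i) hrF (hadj_bz i) ?_ hadj_rb
      exact (MCC.Gp_adj G _ _).mpr
        ⟨MCC.vne (by simp), Or.inl (Or.inl ⟨rfl, fun e => hne e.symm⟩)⟩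
    have ht : t = h j := by
      by_contra hne
      refine MCC.triangle_free hforest hbetaF (hzF j) hrF (hadj_bz j) ?_ hadj_rb
      exact (MCC.Gp_adj G _ _).mpr
        ⟨MCC.vne (by simp), Or.inl (Or.inr ⟨rfl, fun e => hne e.symm⟩)⟩
    have := hv.2
    rw [hs, ht] at this
    exact this
  refine ⟨h, fun i j hij => ?_⟩
  rcases lt_or_gt_of_ne hij with hlt | hgt
  · exact hkey i j hlt
  · exact (hkey j i hgt).symm

/-- `G` has a multicolored clique iff `G'` has an induced forest on
`k' = 3k + 3·C(k,2) + 1` vertices. -/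
theorem stmt0 (k p : ℕ) (hk : 2 ≤ k) (hp : 1 ≤ p) (G : SimpleGraph (Fin k × Fin p)) :
    (∃ h : Fin k → Fin p, ∀ i j : Fin k, i ≠ j → G.Adj (i, h i) (j, h j)) ↔
      ∃ F : Set (MVert k p G),
        F.ncard = 3 * k + 3 * Nat.choose k 2 + 1 ∧ IsInducedForest G F := by
  constructor
  · rintro ⟨h, hcl⟩
    exact MCC.forward G h hcl
  · rintro ⟨F, hcard, hforest⟩
    exact MCC.backward G F hcard hforest
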